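/- Let V be a unital Jordan bimodule over Kan(n). Then for every single index i, the operators on V satisfy R_{\bar{e_i}} R_{\bar{1}} R_{\bar{e_i}} = 0, and for i ≠ j, R_{\bar{e_i}} R_{\bar{1}} R_{\bar{e_j}} = - R_{\bar{e_j}} R_{\bar{1}} R_{\bar{e_i}}. -/

import Mathlib

open Finset in
/-- The Grassmann algebra `G_n` on `n` odd generators, realized as coefficient
functions on subsets of `{1,...,n}` (the basis is `e_I`, `I ⊆ {1,...,n}`). -/
abbrev Gn (n : ℕ) (F : Type) := Finset (Fin n) → F

/-- The sign `(-1)^{#{(i,j) ∈ I×J : j < i}}` arising when multiplying `e_I · e_J`. -/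
def gsign {n : ℕ} (I J : Finset (Fin n)) : ℤ :=
  (-1) ^ (((I ×ˢ J).filter (fun p => p.2 < p.1)).card)

/-- Multiplication in the Grassmann algebra `G_n`. -/
def gmul {F : Type} [Field F] {n : ℕ} (f g : Gn n F) : Gn n F :=
  fun K => ∑ I ∈ K.powerset, (gsign I (K \ I) : F) * f I * g (K \ I)

/-- The odd superderivation `∂/∂e_j` of `G_n`. -/
def pd {F : Type} [Field F] {n : ℕ} (j : Fin n) (f : Gn n F) : Gn n F :=
  fun I => if j ∈ I then 0 else ((-1 : F) ^ ((I.filter (fun i => i < j)).card)) * f (insert j I)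

/-- The grade involution of `G_n`: `e_I ↦ (-1)^{|I|} e_I`. -/
def gInv {F : Type} [Field F] {n : ℕ} (f : Gn n F) : Gn n F :=
  fun I => ((-1 : F) ^ I.card) * f I

/-- The Poisson bracket `{f,g} = (-1)^{|f|} ∑_i (∂f/∂e_i)(∂g/∂e_i)` of `G_n`
(the sign `(-1)^{|f|}` is incorporated bilinearly via the grade involution). -/
def gbr {F : Type} [Field F] {n : ℕ} (f g : Gn n F) : Gn n F :=
  ∑ i : Fin n, gmul (pd i (gInv f)) (pd i g)

/-- `f ∈ G_n` is homogeneous of parity `p`. -/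
def homog {F : Type} [Field F] {n : ℕ} (p : ZMod 2) (f : Gn n F) : Prop :=
  ∀ I : Finset (Fin n), ((I.card : ZMod 2) ≠ p) → f I = 0

/-- `(-1)^p` as an element of the field `F`, for `p : ZMod 2`. -/
def sgn (F : Type) [Field F] (p : ZMod 2) : F := if p = 0 then 1 else -1
/-- The Kantor double `Kan(n) = J(G_n) = G_n ⊕ \bar{G_n}`: an element `(a,b)`
represents `a + \bar{b}`. -/
abbrev Kan (n : ℕ) (F : Type) := Gn n F × Gn n F

/-- Multiplication of the Kantor double `Kan(n)`; the signs `(-1)^{|g|}` of the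
Kantor doubling process are incorporated bilinearly via the grade involution. -/
def kmul {F : Type} [Field F] {n : ℕ} (x y : Kan n F) : Kan n F :=
  (gmul x.1 y.1 + gbr x.2 (gInv y.2), gmul x.1 y.2 + gmul x.2 (gInv y.1))

/-- The basis element `e_I` of `G_n` (coefficient `1` at `I`). -/
def single {F : Type} [Field F] {n : ℕ} (I : Finset (Fin n)) : Gn n F :=
  fun J => if J = I then 1 else 0

/-- The element `e_I ∈ Kan(n)`. -/
def eK {F : Type} [Field F] {n : ℕ} (I : Finset (Fin n)) : Kan n F := (single I, 0)

/-- The element `\bar{e_I} ∈ Kan(n)`. In particular `beK ∅ = \bar{1}`. -/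
def beK {F : Type} [Field F] {n : ℕ} (I : Finset (Fin n)) : Kan n F := (0, single I)

/-- Homogeneity of parity `p` in `Kan(n)` (the bar flips parity). -/
def kHomog {F : Type} [Field F] {n : ℕ} (p : ZMod 2) (x : Kan n F) : Prop :=
  homog p x.1 ∧ homog (p + 1) x.2

/-- Even part of an element of `G_n`. -/
def evenP {F : Type} [Field F] {n : ℕ} (f : Gn n F) : Gn n F :=
  fun I => if (I.card : ZMod 2) = 0 then f I else 0

/-- Odd part of an element of `G_n`. -/
def oddP {F : Type} [Field F] {n : ℕ} (f : Gn n F) : Gn n F :=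
  fun I => if (I.card : ZMod 2) = 1 then f I else 0

/-- Even part of an element of `Kan(n)`. -/
def kEvenPart {F : Type} [Field F] {n : ℕ} (x : Kan n F) : Kan n F := (evenP x.1, oddP x.2)

/-- Odd part of an element of `Kan(n)`. -/
def kOddPart {F : Type} [Field F] {n : ℕ} (x : Kan n F) : Kan n F := (oddP x.1, evenP x.2)

/-- A super vector space is encoded as a product `V0 × V1`; homogeneity of parity `p`. -/
def vHomog {V0 V1 : Type} [Zero V0] [Zero V1] (p : ZMod 2) (v : V0 × V1) : Prop :=
  if p = 0 then v.2 = 0 else v.1 = 0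

/-- The left action of `Kan(n)` on a superbimodule determined from the right action
`act` by supercommutativity: `a·v = (-1)^{|a||v|} v·a` for homogeneous `a, v`. -/
def leftAct {F : Type} [Field F] {n : ℕ} {V0 V1 : Type} [AddCommGroup V0] [Module F V0]
    [AddCommGroup V1] [Module F V1]
    (act : V0 × V1 →ₗ[F] Kan n F →ₗ[F] V0 × V1) (x : Kan n F) (w : V0 × V1) : V0 × V1 :=
  act w (kEvenPart x) + act ((w.1, 0) : V0 × V1) (kOddPart x)
    - act ((0, w.2) : V0 × V1) (kOddPart x)

/-- Multiplication in the split null extension `E = Kan(n) ⊕ V`. -/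
def emul {F : Type} [Field F] {n : ℕ} {V0 V1 : Type} [AddCommGroup V0] [Module F V0]
    [AddCommGroup V1] [Module F V1]
    (act : V0 × V1 →ₗ[F] Kan n F →ₗ[F] V0 × V1)
    (z w : Kan n F × (V0 × V1)) : Kan n F × (V0 × V1) :=
  (kmul z.1 w.1, act z.2 w.1 + leftAct act z.1 w.2)

/-- Homogeneity in the split null extension. -/
def eHomog {F : Type} [Field F] {n : ℕ} {V0 V1 : Type} [AddCommGroup V0] [Module F V0]
    [AddCommGroup V1] [Module F V1] (p : ZMod 2) (z : Kan n F × (V0 × V1)) : Prop :=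
  kHomog p z.1 ∧ vHomog p z.2

/-- A supercommutative superalgebra structure `mul` (with homogeneity predicate `hom`)
is Jordan: supercommutativity and the linearized super Jordan identity hold for
homogeneous elements. -/
def JordanSuper (F : Type) [Field F] {E : Type} [AddCommGroup E] [Module F E]
    (hom : ZMod 2 → E → Prop) (mul : E → E → E) : Prop :=
  (∀ (p q : ZMod 2) (x y : E), hom p x → hom q y → mul x y = sgn F (p * q) • mul y x) ∧
  (∀ (px py pz pt : ZMod 2) (x y z t : E),
      hom px x → hom py y → hom pz z → hom pt t →
      mul (mul (mul x y) z) t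
        + sgn F (py * pz + py * pt + pz * pt) • mul (mul (mul x t) z) y
        + sgn F (px * py + px * pz + px * pt + pz * pt) • mul (mul (mul y t) z) x
      = mul (mul x y) (mul z t) + sgn F (py * pz) • mul (mul x z) (mul y t)
        + sgn F (pt * (py + pz)) • mul (mul x t) (mul y z))

/-- `V = V0 ⊕ V1` with right action `act` is a Jordan superbimodule over `Kan(n)`:
the split null extension `Kan(n) ⊕ V` is a (graded) Jordan superalgebra. -/
def IsJordanBimod {F : Type} [Field F] {n : ℕ} {V0 V1 : Type} [AddCommGroup V0] [Module F V0]
    [AddCommGroup V1] [Module F V1]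
    (act : V0 × V1 →ₗ[F] Kan n F →ₗ[F] V0 × V1) : Prop :=
  JordanSuper F (E := Kan n F × (V0 × V1)) eHomog (emul act) ∧
  (∀ (p q : ZMod 2) (z w : Kan n F × (V0 × V1)),
      eHomog p z → eHomog q w → eHomog (p + q) (emul act z w))

section Helpers
variable {F : Type} [Field F] {n : ℕ}

lemma gmul_zero_left (f : Gn n F) : gmul (0 : Gn n F) f = 0 := by
  funext K; simp [gmul]

lemma gmul_zero_right (f : Gn n F) : gmul f (0 : Gn n F) = 0 := by
  funext K; simp [gmul]

lemma gInv_zero : gInv (0 : Gn n F) = 0 := by funext I; simp [gInv]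

lemma pd_zero (k : Fin n) : pd k (0 : Gn n F) = 0 := by funext I; simp [pd]

lemma gbr_zero_left (g : Gn n F) : gbr (0 : Gn n F) g = 0 := by
  simp [gbr, gInv_zero, pd_zero, gmul_zero_left]

lemma gbr_zero_right (f : Gn n F) : gbr f (0 : Gn n F) = 0 := by
  simp [gbr, pd_zero, gmul_zero_right]

lemma pd_neg (k : Fin n) (f : Gn n F) : pd k (-f) = -(pd k f) := by
  funext I; by_cases h : k ∈ I <;> simp [pd, h]

lemma gmul_neg_left (f g : Gn n F) : gmul (-f) g = -(gmul f g) := by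
  funext K; simp [gmul, Finset.sum_neg_distrib]

lemma gInv_single_empty : gInv (single ∅ : Gn n F) = single ∅ := by
  funext I; by_cases h : I = ∅ <;> simp [gInv, single, h]

lemma gInv_single_singleton (i : Fin n) : gInv (single {i} : Gn n F) = -(single {i}) := by
  funext I; by_cases h : I = {i} <;> simp [gInv, single, h]

lemma pd_single_empty (k : Fin n) : pd k (single ∅ : Gn n F) = 0 := by
  funext I; simp [pd, single, Finset.insert_ne_empty]

lemma pd_single_singleton (k i : Fin n) :
    pd k (single {i} : Gn n F) = if k = i then single ∅ else 0 := by
  funext I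
  by_cases hkI : k ∈ I
  · have hIne : I ≠ ∅ := Finset.ne_empty_of_mem hkI
    by_cases hki : k = i
    · subst hki; simp [pd, single, hkI, hIne]
    · simp [pd, single, hkI, hki]
  · by_cases h : insert k I = {i}
    · have hki : k = i := by
        have := Finset.mem_insert_self k I
        rw [h] at this; simpa using this
      subst hki
      have hI : I = ∅ := by
        apply Finset.eq_empty_of_forall_notMem
        intro x hx
        have hx2 : x ∈ insert k I := Finset.mem_insert_of_mem hx
        rw [h] at hx2
        simp at hx2
        subst hx2; exact hkI hx
      subst hI
      simp [pd, single, h]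
    · by_cases hki : k = i
      · subst hki
        have hI : I ≠ ∅ := by rintro rfl; simp at h
        simp [pd, single, hkI, h, hI]
      · simp [pd, single, hkI, h, hki]

lemma gmul_one_left (f : Gn n F) : gmul (single ∅ : Gn n F) f = f := by
  funext K
  unfold gmul
  rw [Finset.sum_eq_single ∅]
  · simp [single, gsign]
  · intro I _ hne; simp [single, hne]
  · intro h; simp at h

end Helpers

section Helpers2
variable {F : Type} [Field F] {n : ℕ}

lemma gbr_single_left (i : Fin n) (g : Gn n F) :
    gbr (single {i} : Gn n F) g = -(pd i g) := by
  unfold gbr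
  rw [gInv_single_singleton]
  rw [Finset.sum_eq_single i]
  · rw [pd_neg, pd_single_singleton]
    simp [gmul_neg_left, gmul_one_left]
  · intro k _ hk
    rw [pd_neg, pd_single_singleton]
    simp [hk, gmul_zero_left]
  · simp

lemma gbr_single_empty_left (g : Gn n F) : gbr (single ∅ : Gn n F) g = 0 := by
  unfold gbr
  rw [gInv_single_empty]
  simp [pd_single_empty, gmul_zero_left]

lemma kmul_zero_left (x : Kan n F) : kmul (0 : Kan n F) x = 0 := by
  simp [kmul, gmul_zero_left, gbr_zero_left, Prod.ext_iff]

lemma kmul_zero_right (x : Kan n F) : kmul x (0 : Kan n F) = 0 := by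
  simp [kmul, gmul_zero_right, gInv_zero, gbr_zero_right, Prod.ext_iff]

lemma kmul_beK_beK (i j : Fin n) :
    kmul (beK {i} : Kan n F) (beK {j}) = if i = j then eK ∅ else 0 := by
  simp only [kmul, beK, eK]
  rw [gInv_single_singleton, gbr_single_left]
  rw [pd_neg, pd_single_singleton]
  by_cases h : i = j
  · subst h; simp [gmul_zero_left, gmul_zero_right, gInv_zero, Prod.ext_iff]
  · simp [h, gmul_zero_left, gmul_zero_right, gInv_zero, Prod.ext_iff]

lemma kmul_beK_bone (i : Fin n) : kmul (beK {i} : Kan n F) (beK ∅) = 0 := by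
  simp only [kmul, beK]
  rw [gInv_single_empty, gbr_single_left, pd_single_empty]
  simp [gmul_zero_left, gmul_zero_right, gInv_zero, Prod.ext_iff]

lemma kmul_bone_beK (j : Fin n) : kmul (beK ∅ : Kan n F) (beK {j}) = 0 := by
  simp only [kmul, beK]
  rw [gbr_single_empty_left]
  simp [gmul_zero_left, gmul_zero_right, gInv_zero, Prod.ext_iff]

lemma kmul_eone_bone : kmul (eK ∅ : Kan n F) (beK ∅) = beK ∅ := by
  simp only [kmul, eK, beK]
  rw [gbr_zero_left]
  simp [gmul_one_left, gmul_zero_left, gmul_zero_right, gInv_zero, Prod.ext_iff]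

end Helpers2

section Helpers3
variable {F : Type} [Field F] {n : ℕ}

lemma kEvenPart_zero : kEvenPart (0 : Kan n F) = 0 := by
  simp [kEvenPart, Prod.ext_iff]; constructor <;> funext I <;> simp [evenP, oddP]

lemma kOddPart_zero : kOddPart (0 : Kan n F) = 0 := by
  simp [kOddPart, Prod.ext_iff]; constructor <;> funext I <;> simp [evenP, oddP]

lemma oddP_single_empty : oddP (single ∅ : Gn n F) = 0 := by
  funext I; by_cases h : I = ∅ <;> simp [oddP, single, h]

lemma evenP_single_empty : evenP (single ∅ : Gn n F) = single ∅ := by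
  funext I; by_cases h : I = ∅ <;> simp [evenP, single, h]

lemma evenP_zero : evenP (0 : Gn n F) = 0 := by funext I; simp [evenP]
lemma oddP_zero : oddP (0 : Gn n F) = 0 := by funext I; simp [oddP]

lemma kEvenPart_bone : kEvenPart (beK ∅ : Kan n F) = 0 := by
  simp [kEvenPart, beK, evenP_zero, oddP_single_empty, Prod.ext_iff]

lemma kOddPart_bone : kOddPart (beK ∅ : Kan n F) = beK ∅ := by
  simp [kOddPart, beK, oddP_zero, evenP_single_empty, Prod.ext_iff]

lemma homog_zero (p : ZMod 2) : homog p (0 : Gn n F) := fun _ _ => rfl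

lemma homog_single_empty : homog (0 : ZMod 2) (single ∅ : Gn n F) := by
  intro I hI
  by_cases h : I = ∅
  · subst h; simp at hI
  · simp [single, h]

lemma homog_single_singleton (i : Fin n) : homog (1 : ZMod 2) (single {i} : Gn n F) := by
  intro I hI
  by_cases h : I = {i}
  · subst h; simp at hI
  · simp [single, h]

lemma sgn_zero : sgn F 0 = 1 := by simp [sgn]
lemma sgn_one : sgn F (1 : ZMod 2) = -1 := by simp [sgn]

end Helpers3

section Helpers4
variable {F : Type} [Field F] {n : ℕ} {V0 V1 : Type} [AddCommGroup V0] [Module F V0]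
  [AddCommGroup V1] [Module F V1]
  (act : V0 × V1 →ₗ[F] Kan n F →ₗ[F] V0 × V1)

lemma leftAct_zero_right (x : Kan n F) : leftAct act x (0 : V0 × V1) = 0 := by
  simp [leftAct]

lemma leftAct_zero_left (w : V0 × V1) : leftAct act (0 : Kan n F) w = 0 := by
  simp [leftAct, kEvenPart_zero, kOddPart_zero]

lemma leftAct_bone (w : V0 × V1) :
    leftAct act (beK ∅ : Kan n F) w = act (w.1, 0) (beK ∅) - act (0, w.2) (beK ∅) := by
  simp [leftAct, kEvenPart_bone, kOddPart_bone]

lemma eHomog_bi (i : Fin n) :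
    eHomog (0 : ZMod 2) ((beK {i}, 0) : Kan n F × (V0 × V1)) := by
  refine ⟨⟨homog_zero _, ?_⟩, by simp [vHomog]⟩
  simpa [beK] using homog_single_singleton (F := F) i

lemma eHomog_bone :
    eHomog (1 : ZMod 2) ((beK ∅, 0) : Kan n F × (V0 × V1)) := by
  refine ⟨⟨homog_zero _, ?_⟩, by simp [vHomog]⟩
  have : ((1 : ZMod 2) + 1) = 0 := by decide
  rw [this]; exact homog_single_empty

lemma eHomog_vec (p : ZMod 2) (w : V0 × V1) (hw : vHomog p w) :
    eHomog p ((0, w) : Kan n F × (V0 × V1)) :=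
  ⟨⟨homog_zero _, homog_zero _⟩, hw⟩

end Helpers4

section Key
variable {F : Type} [Field F] {n : ℕ} {V0 V1 : Type} [AddCommGroup V0] [Module F V0]
  [AddCommGroup V1] [Module F V1]
  (act : V0 × V1 →ₗ[F] Kan n F →ₗ[F] V0 × V1)

lemma emul_vec_alg (u : V0 × V1) (a : Kan n F) :
    emul act ((0 : Kan n F), u) (a, 0) = (0, act u a) := by
  simp [emul, kmul_zero_left, leftAct_zero_right]

lemma emul_zero_right (u : Kan n F × (V0 × V1)) : emul act u 0 = 0 := by
  simp [emul, kmul_zero_right, leftAct_zero_right, Prod.ext_iff]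

lemma emul_zero_left (u : Kan n F × (V0 × V1)) : emul act 0 u = 0 := by
  simp [emul, kmul_zero_left, leftAct_zero_left, Prod.ext_iff]

lemma key_hom (hJ : IsJordanBimod act) (hu : ∀ v : V0 × V1, act v (eK ∅) = v)
    (p : ZMod 2) (i j : Fin n) (w : V0 × V1) (hw : vHomog p w) :
    act (act (act w (beK {i})) (beK ∅)) (beK {j})
      + act (act (act w (beK {j})) (beK ∅)) (beK {i})
      + (if i = j then sgn F p • (act (w.1, 0) (beK ∅) - act (0, w.2) (beK ∅))
          - act w (beK ∅) else 0)
    = 0 := by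
  have eq := hJ.1.2 p 0 1 0 ((0 : Kan n F), w) (beK {i}, (0 : V0 × V1)) (beK ∅, 0)
      (beK {j}, 0) (eHomog_vec p w hw) (eHomog_bi i) eHomog_bone (eHomog_bi j)
  have hs1 : (0 : ZMod 2) * 1 + 0 * 0 + 1 * 0 = 0 := by decide
  have hs2 : p * 0 + p * 1 + p * 0 + 1 * 0 = p := by ring
  have hs3 : (0 : ZMod 2) * 1 = 0 := by decide
  have hs4 : (0 : ZMod 2) * (0 + 1) = 0 := by decide
  rw [hs1, hs2, hs3, hs4, sgn_zero, one_smul, one_smul, one_smul] at eq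
  by_cases hij : i = j
  · subst hij
    rw [if_pos rfl]
    have eyt : emul act (beK {i}, (0 : V0 × V1)) (beK {i}, 0)
        = ((eK ∅ : Kan n F), (0 : V0 × V1)) := by
      simp [emul, kmul_beK_beK, leftAct_zero_right]
    have e1 : emul act ((eK ∅ : Kan n F), (0 : V0 × V1)) ((beK ∅ : Kan n F), 0)
        = ((beK ∅ : Kan n F), 0) := by
      simp [emul, kmul_eone_bone, leftAct_zero_right]
    have e2 : emul act ((beK ∅ : Kan n F), (0 : V0 × V1)) ((0 : Kan n F), w)
        = (0, act (w.1, 0) (beK ∅) - act (0, w.2) (beK ∅)) := by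
      simp [emul, kmul_zero_right, leftAct_bone]
    have ezt : emul act ((beK ∅ : Kan n F), (0 : V0 × V1)) (beK {i}, 0) = 0 := by
      simp [emul, kmul_bone_beK, leftAct_zero_right, Prod.ext_iff]
    have eyz : emul act (beK {i}, (0 : V0 × V1)) ((beK ∅ : Kan n F), 0) = 0 := by
      simp [emul, kmul_beK_bone, leftAct_zero_right, Prod.ext_iff]
    simp only [emul_vec_alg, eyt, ezt, eyz, e1, e2, emul_zero_right, hu] at eq
    have eq2 := congrArg Prod.snd eq
    simp only [Prod.snd_add, Prod.smul_snd, Prod.snd_zero, add_zero, zero_add] at eq2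
    rw [← eq2]
    abel
  · rw [if_neg hij]
    have eyt : emul act (beK {i}, (0 : V0 × V1)) (beK {j}, 0) = 0 := by
      simp [emul, kmul_beK_beK, hij, leftAct_zero_right, Prod.ext_iff]
    have ezt : emul act ((beK ∅ : Kan n F), (0 : V0 × V1)) (beK {j}, 0) = 0 := by
      simp [emul, kmul_bone_beK, leftAct_zero_right, Prod.ext_iff]
    have eyz : emul act (beK {i}, (0 : V0 × V1)) ((beK ∅ : Kan n F), 0) = 0 := by
      simp [emul, kmul_beK_bone, leftAct_zero_right, Prod.ext_iff]
    simp only [emul_vec_alg, eyt, ezt, eyz, emul_zero_left, emul_zero_right,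
      smul_zero] at eq
    have eq2 := congrArg Prod.snd eq
    simp only [Prod.snd_add, Prod.snd_zero, add_zero, zero_add] at eq2
    rw [add_zero]
    exact eq2

end Key


/-- for a unital Jordan bimodule `V` over `Kan(n)`:
`R_{\bar{e_i}} R_{\bar{1}} R_{\bar{e_i}} = 0`, and for `i ≠ j`,
`R_{\bar{e_i}} R_{\bar{1}} R_{\bar{e_j}} = - R_{\bar{e_j}} R_{\bar{1}} R_{\bar{e_i}}`
(operators acting on the right, composed left to right). -/
theorem bar_ei_bar_one_relations {F : Type} [Field F] (hchar : (2 : F) ≠ 0)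
    {n : ℕ} (hn : 2 ≤ n)
    {V0 V1 : Type} [AddCommGroup V0] [Module F V0] [AddCommGroup V1] [Module F V1]
    (act : V0 × V1 →ₗ[F] Kan n F →ₗ[F] V0 × V1) (hJ : IsJordanBimod act)
    (hu : ∀ v : V0 × V1, act v (eK ∅) = v) :
    (∀ (i : Fin n) (w : V0 × V1),
      act (act (act w (beK {i})) (beK ∅)) (beK {i}) = 0) ∧
    (∀ i j : Fin n, i ≠ j → ∀ w : V0 × V1,
      act (act (act w (beK {i})) (beK ∅)) (beK {j})
        = - act (act (act w (beK {j})) (beK ∅)) (beK {i})) := by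
  have haddX : ∀ (i j : Fin n) (u v : V0 × V1),
      act (act (act (u + v) (beK {i})) (beK ∅)) (beK {j})
        = act (act (act u (beK {i})) (beK ∅)) (beK {j})
          + act (act (act v (beK {i})) (beK ∅)) (beK {j}) := by
    intro i j u v
    simp [map_add]
  have hsplit : ∀ w : V0 × V1, w = ((w.1, 0) : V0 × V1) + ((0, w.2) : V0 × V1) := by
    intro w; ext <;> simp
  have hhom0 : ∀ w : V0 × V1, vHomog (0 : ZMod 2) ((w.1, 0) : V0 × V1) := by
    intro w; simp [vHomog]
  have hhom1 : ∀ w : V0 × V1, vHomog (1 : ZMod 2) ((0, w.2) : V0 × V1) := by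
    intro w; simp [vHomog]
  have halve : ∀ X : V0 × V1, X + X = 0 → X = 0 := by
    intro X hX
    have h2 : (2 : F) • X = 0 := by rw [two_smul]; exact hX
    have h3 := congrArg (fun v : V0 × V1 => (2 : F)⁻¹ • v) h2
    simpa [smul_smul, inv_mul_cancel₀ hchar] using h3
  have keyA : ∀ (i : Fin n) (p : ZMod 2) (w : V0 × V1), vHomog p w →
      act (act (act w (beK {i})) (beK ∅)) (beK {i}) = 0 := by
    intro i p w hw
    have h := key_hom act hJ hu p i i w hw
    rw [if_pos rfl] at h
    apply halve
    have hc : sgn F p • (act (w.1, 0) (beK ∅) - act (0, w.2) (beK ∅))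
        - act w (beK ∅) = 0 := by
      by_cases hp : p = 0
      · subst hp
        have hw2 : w.2 = 0 := by simpa [vHomog] using hw
        have hww : ((w.1, 0) : V0 × V1) = w := by ext <;> simp [hw2]
        have hz : ((0, w.2) : V0 × V1) = 0 := by ext <;> simp [hw2]
        rw [sgn_zero, one_smul, hww, hz]
        simp
      · have hp1 : p = 1 := ((by decide : ∀ q : ZMod 2, q = 0 ∨ q = 1) p).resolve_left hp
        subst hp1
        have hw1 : w.1 = 0 := by simpa [vHomog] using hw
        have hww : ((0, w.2) : V0 × V1) = w := by ext <;> simp [hw1]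
        have hz : ((w.1, 0) : V0 × V1) = 0 := by ext <;> simp [hw1]
        rw [sgn_one, hww, hz]
        simp
    rw [hc, add_zero] at h
    exact h
  have keyB : ∀ (i j : Fin n), i ≠ j → ∀ (p : ZMod 2) (w : V0 × V1), vHomog p w →
      act (act (act w (beK {i})) (beK ∅)) (beK {j})
        + act (act (act w (beK {j})) (beK ∅)) (beK {i}) = 0 := by
    intro i j hij p w hw
    have h := key_hom act hJ hu p i j w hw
    rw [if_neg hij, add_zero] at h
    exact h
  constructor
  · intro i w
    conv_lhs => rw [hsplit w]
    rw [haddX, keyA i 0 _ (hhom0 w), keyA i 1 _ (hhom1 w), add_zero]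
  · intro i j hij w
    have h1 := keyB i j hij 0 _ (hhom0 w)
    have h2 := keyB i j hij 1 _ (hhom1 w)
    have hsum : act (act (act w (beK {i})) (beK ∅)) (beK {j})
        + act (act (act w (beK {j})) (beK ∅)) (beK {i}) = 0 := by
      conv_lhs => rw [hsplit w]
      rw [haddX, haddX]
      have hcomb : (act (act (act ((w.1, 0) : V0 × V1) (beK {i})) (beK ∅)) (beK {j})
            + act (act (act ((w.1, 0) : V0 × V1) (beK {j})) (beK ∅)) (beK {i}))
          + (act (act (act ((0, w.2) : V0 × V1) (beK {i})) (beK ∅)) (beK {j})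
            + act (act (act ((0, w.2) : V0 × V1) (beK {j})) (beK ∅)) (beK {i})) = 0 := by
        rw [h1, h2, add_zero]
      rw [← hcomb]
      abel
    exact eq_neg_of_add_eq_zero_left hsum
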